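/- Let M be a compact manifold, φ a continuous flow, and α ∈ H¹(M,ℤ) \ {0} a quasi-Lyapunov class. Then every recurrence chain R of the lifted flow in the ℤ-covering M̂_α is compact, and the covering projection π_α restricts to a homeomorphism from R onto its image in M. -/

import Mathlib

/-- Combinatorial data of a pseudo-orbit: points `x i` and flow durations `t i`;
the pseudo-orbit follows the flow from `x i` for time `t i` and then jumps to `x (i+1)`. -/
structure PreChain (M : Type*) where
  n : ℕ
  x : Fin (n + 1) → M
  t : Fin (n + 1) → ℝ

namespace PreChain

variable {M : Type*} [MetricSpace M]

/-- `γ` is an `(ε,T)`-pseudo-orbit for the flow `φ`: each flow segment lasts at least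
`T` and each jump has size `< ε`. -/
def IsChain (φ : Flow ℝ M) (T ε : ℝ) (γ : PreChain M) : Prop :=
  (∀ i, T ≤ γ.t i) ∧
  ∀ i : Fin γ.n, dist (φ (γ.t i.castSucc) (γ.x i.castSucc)) (γ.x i.succ) < ε

/-- The starting point of a pseudo-orbit. -/
def first (γ : PreChain M) : M := γ.x 0

/-- The final point of a pseudo-orbit (the endpoint of the last flow segment). -/
def lastPoint (φ : Flow ℝ M) (γ : PreChain M) : M :=
  φ (γ.t (Fin.last γ.n)) (γ.x (Fin.last γ.n))

/-- A periodic `(ε,T)`-pseudo-orbit: the final jump back to the start has size `< ε`. -/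
def IsPeriodic (φ : Flow ℝ M) (T ε : ℝ) (γ : PreChain M) : Prop :=
  γ.IsChain φ T ε ∧ dist (γ.lastPoint φ) γ.first < ε

/-- The total length (duration) of a pseudo-orbit. -/
def len (γ : PreChain M) : ℝ := ∑ i, γ.t i

/-- The pseudo-orbit passes through the point `p`. -/
def Through (γ : PreChain M) (p : M) : Prop := ∃ i, γ.x i = p

end PreChain

/-- Chain reachability `a ⇝ b`: for every `ε > 0` there is an `(ε,T)`-pseudo-orbit
from `a` to `b`. -/
def ChainTo {M : Type*} [MetricSpace M] (φ : Flow ℝ M) (T : ℝ) (a b : M) : Prop :=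
  ∀ ε > 0, ∃ γ : PreChain M, γ.IsChain φ T ε ∧ γ.first = a ∧ γ.lastPoint φ = b

/-- The chain-recurrent set of the flow `φ`. -/
def ChainRec {M : Type*} [MetricSpace M] (φ : Flow ℝ M) (T : ℝ) : Set M :=
  {x | ChainTo φ T x x}

/- The ℤ-covering `M̂_α → M` associated to a nonzero integral class `α` is axiomatized:
`π : Mh → M` is a covering map, `σ` generates the deck group (acting isometrically,
commuting with the lifted flow `φh`, and transitively on fibers), and `c = α(σ) ∈ ℤ`
is the nonzero value of `α` on the generator; `α`-equivariance of `f : Mh → ℝ` reads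
`f (σ x) = f x + c`. `α` quasi-Lyapunov means every `α`-equivariant continuous map
satisfies the pseudo-orbit bound below. -/

namespace ChainAux

variable {M : Type*} [MetricSpace M] (φ : Flow ℝ M)

/-- concatenation of two pre-chains -/
def concat (γ₁ γ₂ : PreChain M) : PreChain M where
  n := γ₁.n + 1 + γ₂.n
  x := fun i => if h : (i : ℕ) < γ₁.n + 1 then γ₁.x ⟨i, h⟩
    else γ₂.x ⟨(i : ℕ) - (γ₁.n + 1), by have := i.isLt; omega⟩
  t := fun i => if h : (i : ℕ) < γ₁.n + 1 then γ₁.t ⟨i, h⟩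
    else γ₂.t ⟨(i : ℕ) - (γ₁.n + 1), by have := i.isLt; omega⟩

lemma concat_first (γ₁ γ₂ : PreChain M) : (concat γ₁ γ₂).first = γ₁.first := by
  simp only [PreChain.first, concat]
  rw [dif_pos (by simp)]
  exact congrArg _ (Fin.ext (by simp))

lemma concat_t_zero (γ₁ γ₂ : PreChain M) : (concat γ₁ γ₂).t 0 = γ₁.t 0 := by
  simp only [concat]
  rw [dif_pos (by simp)]
  exact congrArg _ (Fin.ext (by simp))

lemma concat_lastPoint (γ₁ γ₂ : PreChain M) :
    (concat γ₁ γ₂).lastPoint φ = γ₂.lastPoint φ := by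
  simp only [PreChain.lastPoint, concat]
  rw [dif_neg (by simp [Fin.last]; omega), dif_neg (by simp [Fin.last]; omega)]
  congr 2 <;> exact Fin.ext (by simp [Fin.last])

lemma concat_isChain {T ε : ℝ} {γ₁ γ₂ : PreChain M}
    (h₁ : γ₁.IsChain φ T ε) (h₂ : γ₂.IsChain φ T ε)
    (hmid : dist (γ₁.lastPoint φ) γ₂.first < ε) :
    (concat γ₁ γ₂).IsChain φ T ε := by
  constructor
  · intro i
    simp only [concat]
    split
    · exact h₁.1 _
    · exact h₂.1 _
  · intro i
    have hi : (i : ℕ) < γ₁.n + 1 + γ₂.n := i.isLt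
    rcases lt_trichotomy (i : ℕ) γ₁.n with h | h | h
    · -- inside γ₁
      have key := h₁.2 ⟨(i : ℕ), h⟩
      simp only [concat, Fin.castSucc, Fin.succ, Fin.castAdd, Fin.castLE] at *
      rw [dif_pos (by simpa using Nat.lt_succ_of_lt h), dif_pos (by simpa using Nat.lt_succ_of_lt h),
        dif_pos (by simp; omega)]
      convert key using 3 <;> simp
    · -- the junction
      simp only [concat, Fin.castSucc, Fin.succ, Fin.castAdd, Fin.castLE]
      rw [dif_pos (by simp [h]), dif_pos (by simp [h]), dif_neg (by simp [h])]
      have e1 : (⟨(i:ℕ), by omega⟩ : Fin (γ₁.n + 1)) = Fin.last γ₁.n := Fin.ext (by simp [Fin.last, h])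
      have e2 : (⟨(i:ℕ) + 1 - (γ₁.n + 1), by omega⟩ : Fin (γ₂.n + 1)) = 0 := Fin.ext (by simp [h])
      rw [e1, e2]
      exact hmid
    · -- inside γ₂
      have key := h₂.2 ⟨(i : ℕ) - (γ₁.n + 1), by omega⟩
      simp only [concat, Fin.castSucc, Fin.succ, Fin.castAdd, Fin.castLE] at *
      rw [dif_neg (by simp; omega), dif_neg (by simp; omega), dif_neg (by simp; omega)]
      convert key using 3 <;> simp <;> omega

lemma chainTo_trans {T : ℝ} {a b c : M} (h₁ : ChainTo φ T a b) (h₂ : ChainTo φ T b c) :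
    ChainTo φ T a c := by
  intro ε hε
  obtain ⟨γ₁, hc₁, hf₁, hl₁⟩ := h₁ ε hε
  obtain ⟨γ₂, hc₂, hf₂, hl₂⟩ := h₂ ε hε
  refine ⟨concat γ₁ γ₂, concat_isChain φ hc₁ hc₂ ?_, by rw [concat_first, hf₁],
    by rw [concat_lastPoint, hl₂]⟩
  rw [hl₁, hf₂]
  simpa using hε

end ChainAux

namespace ChainAux2
open ChainAux
variable {M : Type*} [MetricSpace M] (φ : Flow ℝ M)

lemma chainTo_map {T : ℝ} (g : M → M) (hg : Isometry g)
    (hgφ : ∀ t x, φ t (g x) = g (φ t x)) {a b : M} (h : ChainTo φ T a b) :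
    ChainTo φ T (g a) (g b) := by
  intro ε hε
  obtain ⟨γ, hc, hf, hl⟩ := h ε hε
  refine ⟨⟨γ.n, g ∘ γ.x, γ.t⟩, ⟨hc.1, ?_⟩, ?_, ?_⟩
  · intro i
    simpa [Function.comp, hgφ, hg.dist_eq] using hc.2 i
  · simpa [PreChain.first, Function.comp] using congrArg g hf
  · simpa [PreChain.lastPoint, Function.comp, hgφ] using congrArg g hl

def frontSplit (T : ℝ) (γ : PreChain M) : PreChain M where
  n := γ.n + 1
  x := fun i => if (i : ℕ) = 0 then γ.x 0 else if (i : ℕ) = 1 then φ T (γ.x 0)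
    else γ.x ⟨(i : ℕ) - 1, by have := i.isLt; omega⟩
  t := fun i => if (i : ℕ) = 0 then T else if (i : ℕ) = 1 then γ.t 0 - T
    else γ.t ⟨(i : ℕ) - 1, by have := i.isLt; omega⟩

lemma frontSplit_first (T : ℝ) (γ : PreChain M) : (frontSplit φ T γ).first = γ.first := by
  simp [frontSplit, PreChain.first]

lemma frontSplit_t_zero (T : ℝ) (γ : PreChain M) : (frontSplit φ T γ).t 0 = T := by
  simp [frontSplit]

lemma frontSplit_lastPoint (T : ℝ) (γ : PreChain M) :
    (frontSplit φ T γ).lastPoint φ = γ.lastPoint φ := by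
  rcases Nat.eq_zero_or_pos γ.n with h | h
  · simp only [PreChain.lastPoint, frontSplit, Fin.last]
    rw [if_neg (by simp [h]), if_pos (by simp [h]), if_neg (by simp [h]), if_pos (by simp [h]),
      ← Flow.map_add, sub_add_cancel]
    congr 2 <;> exact Fin.ext (by simp [h])
  · simp only [PreChain.lastPoint, frontSplit, Fin.last]
    rw [if_neg (by simp), if_neg (by omega), if_neg (by simp), if_neg (by omega)]
    congr 2 <;> exact Fin.ext (by simp)

lemma frontSplit_isChain {T ε : ℝ} {γ : PreChain M} (h : γ.IsChain φ T ε)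
    (h2T : 2 * T ≤ γ.t 0) (hε : 0 < ε) : (frontSplit φ T γ).IsChain φ T ε := by
  have hT0 : T ≤ γ.t 0 - T := by linarith
  constructor
  · intro i
    simp only [frontSplit]
    split
    · exact le_refl T
    · split
      · exact hT0
      · exact h.1 _
  · intro i
    have hi : (i : ℕ) < γ.n + 1 := i.isLt
    simp only [frontSplit, Fin.castSucc, Fin.succ, Fin.castAdd, Fin.castLE]
    rcases Nat.lt_or_ge (i : ℕ) 1 with h0 | h1
    · have h0 : (i : ℕ) = 0 := by omega
      rw [if_pos (by simp [h0]), if_pos (by simp [h0]), if_neg (by simp [h0]),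
        if_pos (by simp [h0])]
      simpa using hε
    · rcases Nat.lt_or_ge (i : ℕ) 2 with h1' | h2
      · have h1' : (i : ℕ) = 1 := by omega
        have hn1 : 1 ≤ γ.n := by omega
        rw [if_neg (by simp [h1']), if_pos (by simp [h1']), if_neg (by simp [h1']),
          if_pos (by simp [h1']), if_neg (by simp [h1']), if_neg (by simp [h1'])]
        rw [← Flow.map_add, sub_add_cancel]
        have key := h.2 ⟨0, hn1⟩
        simp only [Fin.castSucc, Fin.succ, Fin.castAdd, Fin.castLE] at key
        convert key using 3 <;>
          first
          | exact congrArg _ (Fin.ext (by simp; try omega))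
          | exact Fin.ext (by simp; try omega)
      · rw [if_neg (by omega), if_neg (by omega), if_neg (by omega), if_neg (by omega),
          if_neg (by omega), if_neg (by omega)]
        have key := h.2 ⟨(i : ℕ) - 1, by omega⟩
        simp only [Fin.castSucc, Fin.succ, Fin.castAdd, Fin.castLE] at key
        convert key using 3 <;>
          first
          | exact congrArg _ (Fin.ext (by simp; try omega))
          | exact Fin.ext (by simp; try omega)

def backSplit (T : ℝ) (γ : PreChain M) : PreChain M where
  n := γ.n + 1
  x := fun i => if h : (i : ℕ) < γ.n + 1 then γ.x ⟨i, h⟩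
    else φ (γ.t (Fin.last γ.n) - T) (γ.x (Fin.last γ.n))
  t := fun i => if h : (i : ℕ) < γ.n then γ.t ⟨i, by omega⟩
    else if (i : ℕ) = γ.n then γ.t (Fin.last γ.n) - T else T

lemma backSplit_first (T : ℝ) (γ : PreChain M) : (backSplit φ T γ).first = γ.first := by
  simp only [backSplit, PreChain.first]
  rw [dif_pos (by simp)]
  exact congrArg _ (Fin.ext (by simp))

lemma backSplit_t_last (T : ℝ) (γ : PreChain M) :
    (backSplit φ T γ).t (Fin.last (γ.n + 1)) = T := by
  simp [backSplit, Fin.last]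

lemma backSplit_lastPoint (T : ℝ) (γ : PreChain M) :
    (backSplit φ T γ).lastPoint φ = γ.lastPoint φ := by
  simp only [PreChain.lastPoint, backSplit, Fin.last]
  rw [dif_neg (by simp), dif_neg (by simp), if_neg (by simp), ← Flow.map_add,
    add_sub_cancel]

lemma backSplit_isChain {T ε : ℝ} {γ : PreChain M} (h : γ.IsChain φ T ε)
    (h2T : 2 * T ≤ γ.t (Fin.last γ.n)) (hε : 0 < ε) : (backSplit φ T γ).IsChain φ T ε := by
  have hT0 : T ≤ γ.t (Fin.last γ.n) - T := by linarith
  constructor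
  · intro i
    simp only [backSplit]
    split
    · exact h.1 _
    · split
      · exact hT0
      · exact le_refl T
  · intro i
    have hi : (i : ℕ) < γ.n + 1 := i.isLt
    rcases Nat.lt_or_ge (i : ℕ) γ.n with h0 | h1
    · have hx1 : (backSplit φ T γ).x i.castSucc = γ.x ⟨(i : ℕ), by omega⟩ := by
        simp only [backSplit]
        rw [dif_pos (by change (i : ℕ) < γ.n + 1; omega)]
        exact congrArg _ (Fin.ext (by rfl))
      have ht1 : (backSplit φ T γ).t i.castSucc = γ.t ⟨(i : ℕ), by omega⟩ := by
        simp only [backSplit]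
        rw [dif_pos (by change (i : ℕ) < γ.n; omega)]
        exact congrArg _ (Fin.ext (by rfl))
      have hx2 : (backSplit φ T γ).x i.succ = γ.x ⟨(i : ℕ) + 1, by omega⟩ := by
        simp only [backSplit]
        rw [dif_pos (by change (i : ℕ) + 1 < γ.n + 1; omega)]
        exact congrArg _ (Fin.ext (by rfl))
      rw [hx1, ht1, hx2]
      have key := h.2 ⟨(i : ℕ), h0⟩
      simp only [Fin.castSucc, Fin.succ, Fin.castAdd, Fin.castLE] at key
      convert key using 3 <;>
        first
        | exact congrArg _ (Fin.ext (by simp; try omega))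
        | exact Fin.ext (by simp; try omega)
    · have h1 : (i : ℕ) = γ.n := by omega
      have hx1 : (backSplit φ T γ).x i.castSucc = γ.x (Fin.last γ.n) := by
        simp only [backSplit]
        rw [dif_pos (by change (i : ℕ) < γ.n + 1; omega)]
        exact congrArg _ (Fin.ext (by exact h1))
      have ht1 : (backSplit φ T γ).t i.castSucc = γ.t (Fin.last γ.n) - T := by
        simp only [backSplit]
        rw [dif_neg (by change ¬ (i : ℕ) < γ.n; omega), if_pos (by exact h1)]
      have hx2 : (backSplit φ T γ).x i.succ = φ (γ.t (Fin.last γ.n) - T) (γ.x (Fin.last γ.n)) := by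
        simp only [backSplit]
        rw [dif_neg (by change ¬ (i : ℕ) + 1 < γ.n + 1; omega)]
      rw [hx1, ht1, hx2]
      simpa using hε

def setFirst (γ : PreChain M) (y : M) : PreChain M :=
  ⟨γ.n, Function.update γ.x 0 y, γ.t⟩

lemma setFirst_first (γ : PreChain M) (y : M) : (setFirst γ y).first = y := by
  simp [setFirst, PreChain.first]
  exact Function.update_self _ _ _

lemma setFirst_lastPoint (γ : PreChain M) (y : M) (hn : 0 < γ.n) :
    (setFirst γ y).lastPoint φ = γ.lastPoint φ := by
  simp only [setFirst, PreChain.lastPoint]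
  rw [Function.update_of_ne (by simp [Fin.ext_iff, Fin.last]; omega)]

lemma setFirst_isChain {T ε : ℝ} {γ : PreChain M} {y : M} (h : γ.IsChain φ T ε)
    (hn : 0 < γ.n)
    (hjump : dist (φ (γ.t 0) y) (γ.x ⟨1, by omega⟩) < ε) :
    (setFirst γ y).IsChain φ T ε := by
  constructor
  · exact h.1
  · intro i
    change Fin γ.n at i
    simp only [setFirst]
    rcases Nat.eq_zero_or_pos (i : ℕ) with h0 | h1
    · have e0 : i.castSucc = 0 := Fin.ext (by simp [h0])
      have e1 : i.succ = ⟨1, by omega⟩ := Fin.ext (by simp [h0])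
      rw [e0, e1, Function.update_self, Function.update_of_ne (by simp [Fin.ext_iff])]
      exact hjump
    · rw [Function.update_of_ne (by simp [Fin.ext_iff]; try omega),
        Function.update_of_ne (by simp [Fin.ext_iff]; try omega)]
      exact h.2 i

def setLast (γ : PreChain M) (z : M) : PreChain M :=
  ⟨γ.n, Function.update γ.x (Fin.last γ.n) z, γ.t⟩

lemma setLast_first (γ : PreChain M) (z : M) (hn : 0 < γ.n) :
    (setLast γ z).first = γ.first := by
  simp only [setLast, PreChain.first]
  exact Function.update_of_ne (show (0 : Fin (γ.n + 1)) ≠ Fin.last γ.n by simp [Fin.ext_iff, Fin.last]; try omega) _ _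

lemma setLast_lastPoint (γ : PreChain M) (z : M) :
    (setLast γ z).lastPoint φ = φ (γ.t (Fin.last γ.n)) z := by
  simp [setLast, PreChain.lastPoint]

lemma setLast_isChain {T ε : ℝ} {γ : PreChain M} {z : M} (h : γ.IsChain φ T ε)
    (hn : 0 < γ.n)
    (hjump : dist (φ (γ.t ⟨γ.n - 1, by omega⟩) (γ.x ⟨γ.n - 1, by omega⟩)) z < ε) :
    (setLast γ z).IsChain φ T ε := by
  constructor
  · exact h.1
  · intro i
    change Fin γ.n at i
    have hi : (i : ℕ) < γ.n := i.isLt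
    simp only [setLast]
    rcases Nat.lt_or_ge (i : ℕ) (γ.n - 1) with h0 | h1
    · rw [Function.update_of_ne (by simp [Fin.ext_iff, Fin.last]; omega),
        Function.update_of_ne (by simp [Fin.ext_iff, Fin.last]; omega)]
      exact h.2 i
    · have h1 : (i : ℕ) = γ.n - 1 := by omega
      have e0 : i.castSucc = (⟨γ.n - 1, by omega⟩ : Fin (γ.n + 1)) := Fin.ext (by simp [h1])
      have e1 : i.succ = Fin.last γ.n := Fin.ext (by simp [Fin.last, h1]; try omega)
      rw [e0, e1, Function.update_self, Function.update_of_ne (by simp [Fin.ext_iff, Fin.last]; omega)]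
      exact hjump

end ChainAux2

namespace DeckAux

variable {Mh : Type*} [MetricSpace Mh]

lemma isometry_symm (σ : Equiv.Perm Mh) (hiso : Isometry ⇑σ) : Isometry ⇑σ.symm :=
  Isometry.of_dist_eq fun a b => by
    rw [← hiso.dist_eq (σ.symm a) (σ.symm b)]
    simp

lemma isometry_zpow (σ : Equiv.Perm Mh) (hiso : Isometry ⇑σ) (k : ℤ) :
    Isometry ⇑(σ ^ k) := by
  induction k using Int.induction_on with
  | zero => simpa using isometry_id
  | succ n ih =>
      rw [zpow_add_one, Equiv.Perm.coe_mul]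
      exact ih.comp hiso
  | pred n ih =>
      rw [zpow_sub_one, Equiv.Perm.coe_mul]
      have : (σ⁻¹ : Equiv.Perm Mh) = σ.symm := rfl
      rw [this]
      exact ih.comp (isometry_symm σ hiso)

variable (φh : Flow ℝ Mh)

lemma flow_symm (σ : Equiv.Perm Mh) (hσφ : ∀ (t : ℝ) (x : Mh), φh t (σ x) = σ (φh t x)) :
    ∀ (t : ℝ) (x : Mh), φh t (σ.symm x) = σ.symm (φh t x) := by
  intro t x
  apply σ.injective
  rw [← hσφ, Equiv.apply_symm_apply, Equiv.apply_symm_apply]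

lemma flow_zpow (σ : Equiv.Perm Mh) (hσφ : ∀ (t : ℝ) (x : Mh), φh t (σ x) = σ (φh t x))
    (k : ℤ) : ∀ (t : ℝ) (x : Mh), φh t ((σ ^ k) x) = (σ ^ k) (φh t x) := by
  induction k using Int.induction_on with
  | zero => simp
  | succ n ih =>
      intro t x
      rw [zpow_add_one, Equiv.Perm.mul_apply, Equiv.Perm.mul_apply, ih, hσφ]
  | pred n ih =>
      intro t x
      rw [zpow_sub_one, Equiv.Perm.mul_apply, Equiv.Perm.mul_apply]
      have h1 : (σ⁻¹ : Equiv.Perm Mh) = σ.symm := rfl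
      rw [h1, ih, flow_symm φh σ hσφ]

lemma fun_zpow {β : Type*} [AddCommGroup β] (σ : Equiv.Perm Mh) (g : Mh → β) (v : β)
    (hg : ∀ x, g (σ x) = g x + v) (k : ℤ) : ∀ x, g ((σ ^ k) x) = g x + k • v := by
  have hsymm : ∀ x, g (σ.symm x) = g x - v := by
    intro x
    have := hg (σ.symm x)
    rw [Equiv.apply_symm_apply] at this
    rw [this]
    abel
  induction k using Int.induction_on with
  | zero => simp
  | succ n ih =>
      intro x
      rw [zpow_add_one, Equiv.Perm.mul_apply, ih, hg]
      have : ((n : ℤ) + 1) • v = (n : ℤ) • v + v := by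
        rw [add_smul, one_smul]
      rw [this]
      abel
  | pred n ih =>
      intro x
      rw [zpow_sub_one, Equiv.Perm.mul_apply]
      have h1 : (σ⁻¹ : Equiv.Perm Mh) = σ.symm := rfl
      rw [h1, ih, hsymm]
      have : (-(n : ℤ) - 1) • v = (-(n : ℤ)) • v - v := by
        rw [sub_smul, one_smul]
      rw [this]
      abel

lemma proj_zpow {N : Type*} (σ : Equiv.Perm Mh) (π : Mh → N)
    (hπσ : ∀ x, π (σ x) = π x) (k : ℤ) : ∀ x, π ((σ ^ k) x) = π x := by
  have hsymm : ∀ x, π (σ.symm x) = π x := by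
    intro x
    conv_rhs => rw [← Equiv.apply_symm_apply σ x]
    rw [hπσ]
  induction k using Int.induction_on with
  | zero => simp
  | succ n ih =>
      intro x
      rw [zpow_add_one, Equiv.Perm.mul_apply, ih, hπσ]
  | pred n ih =>
      intro x
      rw [zpow_sub_one, Equiv.Perm.mul_apply]
      have h1 : (σ⁻¹ : Equiv.Perm Mh) = σ.symm := rfl
      rw [h1, ih, hsymm]

end DeckAux

namespace ChainAux3
open ChainAux ChainAux2

variable {M : Type*} [MetricSpace M] (φ : Flow ℝ M)

lemma isChain_mono {T ε ε' : ℝ} {γ : PreChain M} (h : γ.IsChain φ T ε) (hee : ε ≤ ε') :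
    γ.IsChain φ T ε' :=
  ⟨h.1, fun i => lt_of_lt_of_le (h.2 i) hee⟩

lemma concat_t_last (γ₁ γ₂ : PreChain M) :
    (ChainAux.concat γ₁ γ₂).t (Fin.last (ChainAux.concat γ₁ γ₂).n) = γ₂.t (Fin.last γ₂.n) := by
  simp only [ChainAux.concat, Fin.last]
  rw [dif_neg (by simp; omega)]
  exact congrArg _ (Fin.ext (by simp))

lemma concat_n_pos (γ₁ γ₂ : PreChain M) : 0 < (ChainAux.concat γ₁ γ₂).n := by
  simp [ChainAux.concat]

lemma frontSplit_n_pos (T : ℝ) (γ : PreChain M) : 0 < (frontSplit φ T γ).n := by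
  simp [frontSplit]

lemma backSplit_n_pos (T : ℝ) (γ : PreChain M) : 0 < (backSplit φ T γ).n := by
  simp [backSplit]

/-- A chain between given endpoints, with positive length and controlled first duration. -/
lemma exists_good_chain_front {T ε : ℝ} (hT : 0 < T) (hε : 0 < ε) {a b : M}
    (hab : ChainTo φ T a b) (hbb : ChainTo φ T b b) :
    ∃ γ : PreChain M, γ.IsChain φ T ε ∧ γ.first = a ∧ γ.lastPoint φ = b ∧ 0 < γ.n ∧
      γ.t 0 ∈ Set.Icc T (2 * T) := by
  obtain ⟨γ₁, hc₁, hf₁, hl₁⟩ := hab ε hε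
  obtain ⟨γ₂, hc₂, hf₂, hl₂⟩ := hbb ε hε
  set γ := ChainAux.concat γ₁ γ₂ with hγ
  have hγc : γ.IsChain φ T ε := concat_isChain φ hc₁ hc₂ (by rw [hl₁, hf₂]; simpa using hε)
  have hγf : γ.first = a := by rw [concat_first, hf₁]
  have hγl : γ.lastPoint φ = b := by rw [concat_lastPoint, hl₂]
  by_cases hsplit : 2 * T ≤ γ.t 0
  · refine ⟨frontSplit φ T γ, frontSplit_isChain φ hγc hsplit hε, ?_, ?_, frontSplit_n_pos φ T γ, ?_⟩
    · rw [frontSplit_first, hγf]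
    · rw [frontSplit_lastPoint, hγl]
    · rw [frontSplit_t_zero]
      constructor <;> linarith
  · exact ⟨γ, hγc, hγf, hγl, concat_n_pos γ₁ γ₂,
      ⟨hγc.1 0, le_of_not_ge hsplit⟩⟩

/-- A chain between given endpoints, with positive length and controlled last duration. -/
lemma exists_good_chain_back {T ε : ℝ} (hT : 0 < T) (hε : 0 < ε) {a b : M}
    (hab : ChainTo φ T a b) (haa : ChainTo φ T a a) :
    ∃ γ : PreChain M, γ.IsChain φ T ε ∧ γ.first = a ∧ γ.lastPoint φ = b ∧ 0 < γ.n ∧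
      γ.t (Fin.last γ.n) ∈ Set.Icc T (2 * T) := by
  obtain ⟨γ₁, hc₁, hf₁, hl₁⟩ := haa ε hε
  obtain ⟨γ₂, hc₂, hf₂, hl₂⟩ := hab ε hε
  set γ := ChainAux.concat γ₁ γ₂ with hγ
  have hγc : γ.IsChain φ T ε := concat_isChain φ hc₁ hc₂ (by rw [hl₁, hf₂]; simpa using hε)
  have hγf : γ.first = a := by rw [concat_first, hf₁]
  have hγl : γ.lastPoint φ = b := by rw [concat_lastPoint, hl₂]
  by_cases hsplit : 2 * T ≤ γ.t (Fin.last γ.n)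
  · refine ⟨backSplit φ T γ, backSplit_isChain φ hγc hsplit hε, ?_, ?_, backSplit_n_pos φ T γ, ?_⟩
    · rw [backSplit_first, hγf]
    · rw [backSplit_lastPoint, hγl]
    · have h2 : (backSplit φ T γ).t (Fin.last (backSplit φ T γ).n) = T :=
        backSplit_t_last φ T γ
      rw [h2]
      constructor <;> linarith
  · exact ⟨γ, hγc, hγf, hγl, concat_n_pos γ₁ γ₂,
      ⟨hγc.1 _, le_of_not_ge hsplit⟩⟩

end ChainAux3

namespace ChainAux4
open ChainAux ChainAux2 ChainAux3

variable {M : Type*} [MetricSpace M] (φ : Flow ℝ M)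

lemma chainTo_closure_left {T : ℝ} (hT : 0 < T) {x₀ : M} (hrec : ChainTo φ T x₀ x₀)
    {S : Set M} (hS : ∀ z ∈ S, ChainTo φ T z x₀) {y : M} (hy : y ∈ closure S) :
    ChainTo φ T y x₀ := by
  intro ε hε
  have hε2 : 0 < ε / 2 := half_pos hε
  obtain ⟨δ, hδpos, hδ⟩ : ∃ δ > 0, ∀ z, dist z y < δ → ∀ t ∈ Set.Icc T (2 * T),
      dist (φ t z) (φ t y) < ε / 2 := by
    have hcont : Continuous fun p : ℝ × M => dist (φ p.1 p.2) (φ p.1 y) :=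
      (φ.continuous continuous_fst continuous_snd).dist
        (φ.continuous continuous_fst continuous_const)
    have hu : IsOpen {p : ℝ × M | dist (φ p.1 p.2) (φ p.1 y) < ε / 2} :=
      isOpen_lt hcont continuous_const
    have hsub : (Set.Icc T (2 * T)) ×ˢ ({y} : Set M) ⊆
        {p : ℝ × M | dist (φ p.1 p.2) (φ p.1 y) < ε / 2} := by
      rintro ⟨t, z⟩ ⟨-, rfl⟩
      simpa using hε2
    obtain ⟨u, v, hu', hv', hIu, hyv, huv⟩ :=
      generalized_tube_lemma isCompact_Icc isCompact_singleton hu hsub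
    obtain ⟨δ, hδpos, hball⟩ := Metric.isOpen_iff.1 hv' y (hyv rfl)
    refine ⟨δ, hδpos, fun z hz t ht => ?_⟩
    have hmem : ((t, z) : ℝ × M) ∈ u ×ˢ v :=
      Set.mem_prod.2 ⟨hIu ht, hball (Metric.mem_ball.2 hz)⟩
    exact huv hmem
  obtain ⟨y', hy'S, hy'd⟩ : ∃ y' ∈ S, dist y' y < δ := by
    obtain ⟨y', hy'S, hd⟩ := Metric.mem_closure_iff.1 hy δ hδpos
    exact ⟨y', hy'S, by rwa [dist_comm]⟩
  obtain ⟨γ, hc, hf, hl, hn, ht0⟩ := exists_good_chain_front φ hT hε2 (hS y' hy'S) hrec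
  refine ⟨setFirst γ y, ?_, setFirst_first γ y, by rw [setFirst_lastPoint φ γ y hn, hl]⟩
  have hx1 : dist (φ (γ.t 0) γ.first) (γ.x ⟨1, by omega⟩) < ε / 2 := by
    have key := hc.2 ⟨0, hn⟩
    have e0 : (⟨0, hn⟩ : Fin γ.n).castSucc = 0 := Fin.ext (by simp)
    have e1 : (⟨0, hn⟩ : Fin γ.n).succ = ⟨1, by omega⟩ := Fin.ext (by simp)
    rwa [e0, e1] at key
  have hjump : dist (φ (γ.t 0) y) (γ.x ⟨1, by omega⟩) < ε := by
    calc dist (φ (γ.t 0) y) (γ.x ⟨1, by omega⟩)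
        ≤ dist (φ (γ.t 0) y) (φ (γ.t 0) y') + dist (φ (γ.t 0) y') (γ.x ⟨1, by omega⟩) :=
          dist_triangle _ _ _
      _ < ε / 2 + ε / 2 :=
          add_lt_add (by simpa [dist_comm] using hδ y' hy'd (γ.t 0) ht0) (hf ▸ hx1)
      _ = ε := add_halves ε
  exact setFirst_isChain φ (isChain_mono φ hc (le_of_lt (half_lt_self hε))) hn hjump

lemma chainTo_closure_right {T : ℝ} (hT : 0 < T) {x₀ : M} (hrec : ChainTo φ T x₀ x₀)
    {S : Set M} (hS : ∀ z ∈ S, ChainTo φ T x₀ z) {y : M} (hy : y ∈ closure S) :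
    ChainTo φ T x₀ y := by
  intro ε hε
  have hε2 : 0 < ε / 2 := half_pos hε
  obtain ⟨δ, hδpos, hδ⟩ : ∃ δ > 0, ∀ z, dist z y < δ → ∀ t ∈ Set.Icc T (2 * T),
      dist (φ (-t) z) (φ (-t) y) < ε / 2 := by
    have hcont : Continuous fun p : ℝ × M => dist (φ (-p.1) p.2) (φ (-p.1) y) :=
      (φ.continuous continuous_fst.neg continuous_snd).dist
        (φ.continuous continuous_fst.neg continuous_const)
    have hu : IsOpen {p : ℝ × M | dist (φ (-p.1) p.2) (φ (-p.1) y) < ε / 2} :=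
      isOpen_lt hcont continuous_const
    have hsub : (Set.Icc T (2 * T)) ×ˢ ({y} : Set M) ⊆
        {p : ℝ × M | dist (φ (-p.1) p.2) (φ (-p.1) y) < ε / 2} := by
      rintro ⟨t, z⟩ ⟨-, rfl⟩
      simpa using hε2
    obtain ⟨u, v, hu', hv', hIu, hyv, huv⟩ :=
      generalized_tube_lemma isCompact_Icc isCompact_singleton hu hsub
    obtain ⟨δ, hδpos, hball⟩ := Metric.isOpen_iff.1 hv' y (hyv rfl)
    refine ⟨δ, hδpos, fun z hz t ht => ?_⟩
    have hmem : ((t, z) : ℝ × M) ∈ u ×ˢ v :=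
      Set.mem_prod.2 ⟨hIu ht, hball (Metric.mem_ball.2 hz)⟩
    exact huv hmem
  obtain ⟨y', hy'S, hy'd⟩ : ∃ y' ∈ S, dist y' y < δ := by
    obtain ⟨y', hy'S, hd⟩ := Metric.mem_closure_iff.1 hy δ hδpos
    exact ⟨y', hy'S, by rwa [dist_comm]⟩
  obtain ⟨γ, hc, hf, hl, hn, htl⟩ := exists_good_chain_back φ hT hε2 (hS y' hy'S) hrec
  set tl := γ.t (Fin.last γ.n) with htl_def
  set z := φ (-tl) y with hz_def
  have hinv : φ (-tl) (γ.lastPoint φ) = γ.x (Fin.last γ.n) := by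
    simp only [PreChain.lastPoint]
    rw [← Flow.map_add, neg_add_cancel, Flow.map_zero_apply]
  have hxlast : γ.x (Fin.last γ.n) = φ (-tl) y' := by rw [← hinv, hl]
  refine ⟨setLast γ z, ?_, by rw [setLast_first γ z hn, hf], ?_⟩
  · have hold := hc.2 ⟨γ.n - 1, by omega⟩
    have e0 : (⟨γ.n - 1, by omega⟩ : Fin γ.n).castSucc = ⟨γ.n - 1, by omega⟩ :=
      Fin.ext (by simp)
    have e1 : (⟨γ.n - 1, by omega⟩ : Fin γ.n).succ = Fin.last γ.n :=
      Fin.ext (by simp [Fin.last]; omega)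
    rw [e0, e1] at hold
    have hdz : dist (γ.x (Fin.last γ.n)) z < ε / 2 := by
      rw [hxlast, hz_def]
      exact hδ y' hy'd tl htl
    have hjump : dist (φ (γ.t ⟨γ.n - 1, by omega⟩) (γ.x ⟨γ.n - 1, by omega⟩)) z < ε := by
      calc dist (φ (γ.t ⟨γ.n - 1, by omega⟩) (γ.x ⟨γ.n - 1, by omega⟩)) z
          ≤ dist (φ (γ.t ⟨γ.n - 1, by omega⟩) (γ.x ⟨γ.n - 1, by omega⟩)) (γ.x (Fin.last γ.n))
            + dist (γ.x (Fin.last γ.n)) z := dist_triangle _ _ _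
        _ < ε / 2 + ε / 2 := add_lt_add hold hdz
        _ = ε := add_halves ε
    exact setLast_isChain φ (isChain_mono φ hc (le_of_lt (half_lt_self hε))) hn hjump
  · rw [setLast_lastPoint]
    show φ tl z = y
    rw [hz_def, ← Flow.map_add, add_neg_cancel, Flow.map_zero_apply]

end ChainAux4


theorem recurrence_chain_compact_embeds
    {M Mh : Type*} [MetricSpace M] [CompactSpace M] [MetricSpace Mh] [ProperSpace Mh]
    (φ : Flow ℝ M) (φh : Flow ℝ Mh) (π : Mh → M) (hcov : IsCoveringMap π)
    (hπφ : ∀ (t : ℝ) (xh : Mh), π (φh t xh) = φ t (π xh))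
    (σ : Equiv.Perm Mh) (hiso : Isometry σ)
    (hπσ : ∀ xh, π (σ xh) = π xh)
    (hσφ : ∀ (t : ℝ) (xh : Mh), φh t (σ xh) = σ (φh t xh))
    (hdeck : ∀ xh yh : Mh, π xh = π yh → ∃ k : ℤ, (σ ^ k) xh = yh)
    (c : ℤ) (hc : c ≠ 0)
    (T : ℝ) (hT : 0 < T)
    (hfex : ∃ f : Mh → ℝ, Continuous f ∧ ∀ xh, f (σ xh) = f xh + c)
    (hqL : ∀ f : Mh → ℝ, Continuous f → (∀ xh, f (σ xh) = f xh + c) →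
      ∃ C ≥ (0 : ℝ), ∃ ε > 0, ∀ γ : PreChain Mh, γ.IsChain φh T ε →
        f (γ.lastPoint φh) - C ≤ f γ.first) :
    ∀ x₀ ∈ ChainRec φh T,
      IsCompact {y : Mh | ChainTo φh T x₀ y ∧ ChainTo φh T y x₀} ∧
      ∃ e : {y : Mh | ChainTo φh T x₀ y ∧ ChainTo φh T y x₀} ≃ₜ
          ↥(π '' {y : Mh | ChainTo φh T x₀ y ∧ ChainTo φh T y x₀}),
        ∀ z, (e z : M) = π (z : Mh) := by
  intro x₀ hx₀
  have hrec : ChainTo φh T x₀ x₀ := hx₀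
  obtain ⟨f, hfc, hfσ⟩ := hfex
  obtain ⟨C, hC0, ε₀, hε₀, hbound⟩ := hqL f hfc hfσ
  set R : Set Mh := {y : Mh | ChainTo φh T x₀ y ∧ ChainTo φh T y x₀} with hRdef
  have hc1 : (1 : ℝ) ≤ |(c : ℝ)| := by exact_mod_cast Int.one_le_abs hc
  have hisok : ∀ k : ℤ, Isometry ⇑(σ ^ k) := DeckAux.isometry_zpow σ hiso
  have hσφk : ∀ (k : ℤ) (t : ℝ) (x : Mh), φh t ((σ ^ k) x) = (σ ^ k) (φh t x) :=
    fun k => DeckAux.flow_zpow φh σ hσφ k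
  have hfk : ∀ (k : ℤ) (x : Mh), f ((σ ^ k) x) = f x + (k : ℝ) * c := by
    intro k x
    have := DeckAux.fun_zpow σ f (c : ℝ) hfσ k x
    rwa [zsmul_eq_mul] at this
  have hreach : ∀ a b : Mh, ChainTo φh T a b → f b ≤ f a + C := by
    intro a b h
    obtain ⟨γ, hch, hfst, hlst⟩ := h ε₀ hε₀
    have := hbound γ hch
    rw [hfst, hlst] at this
    linarith
  -- injectivity of π on R
  have hinj : Set.InjOn π R := by
    intro y hyR y' hy'R hpi
    by_contra hne
    obtain ⟨k, hk⟩ := hdeck y y' hpi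
    have hk0 : k ≠ 0 := by
      rintro rfl
      rw [zpow_zero] at hk
      exact hne (by simpa using hk)
    have h1 : ChainTo φh T y ((σ ^ k) y) := by
      rw [hk]
      exact ChainAux.chainTo_trans φh hyR.2 hy'R.1
    have h2 : ChainTo φh T ((σ ^ k) y) y := by
      rw [hk]
      exact ChainAux.chainTo_trans φh hy'R.2 hyR.1
    have h2' : ChainTo φh T y ((σ ^ (-k)) y) := by
      have hmap := ChainAux2.chainTo_map φh _ (hisok (-k)) (hσφk (-k)) h2
      have he : (σ ^ (-k)) ((σ ^ k) y) = y := by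
        rw [← Equiv.Perm.mul_apply, ← zpow_add, neg_add_cancel, zpow_zero,
          Equiv.Perm.coe_one, id_eq]
      rwa [he] at hmap
    have hiter : ∀ (j : ℤ), ChainTo φh T y ((σ ^ j) y) →
        ∀ m : ℕ, ChainTo φh T y ((σ ^ (j * ((m : ℤ) + 1))) y) := by
      intro j hj m
      induction m with
      | zero => simpa using hj
      | succ m ih =>
          have hmap := ChainAux2.chainTo_map φh _ (hisok (j * ((m : ℤ) + 1)))
            (hσφk (j * ((m : ℤ) + 1))) hj
          have heq : (σ ^ (j * ((m : ℤ) + 1))) ((σ ^ j) y)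
              = (σ ^ (j * (((m + 1 : ℕ) : ℤ) + 1))) y := by
            rw [← Equiv.Perm.mul_apply, ← zpow_add]
            congr 1
            push_cast
            ring
          rw [heq] at hmap
          exact ChainAux.chainTo_trans φh ih hmap
    have hb : ∀ (j : ℤ), ChainTo φh T y ((σ ^ j) y) → ∀ m : ℕ,
        (j : ℝ) * ((m : ℝ) + 1) * c ≤ C := by
      intro j hj m
      have hle := hreach y _ (hiter j hj m)
      rw [hfk] at hle
      have h' : ((j * ((m : ℤ) + 1) : ℤ) : ℝ) * (c : ℝ) ≤ C := by linarith
      push_cast at h'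
      linarith
    obtain ⟨m, hm⟩ := exists_nat_gt C
    have b1 := hb k h1 m
    have b2 := hb (-k) h2' m
    have hk1 : (1 : ℝ) ≤ |(k : ℝ)| := by exact_mod_cast Int.one_le_abs hk0
    set q : ℝ := (k : ℝ) * ((m : ℝ) + 1) * c with hq
    have hb2' : -q ≤ C := by
      push_cast at b2
      rw [hq]
      linarith
    have habs : |q| ≤ C := abs_le.2 ⟨by linarith, b1⟩
    have hmq : (m : ℝ) + 1 ≤ |q| := by
      rw [hq, abs_mul, abs_mul]
      have hm1 : |(m : ℝ) + 1| = (m : ℝ) + 1 := abs_of_nonneg (by positivity)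
      rw [hm1]
      have hpos : (0:ℝ) ≤ (m : ℝ) + 1 := by positivity
      have t1 : (m : ℝ) + 1 ≤ |(k : ℝ)| * ((m : ℝ) + 1) := le_mul_of_one_le_left hpos hk1
      have t2 : |(k : ℝ)| * ((m : ℝ) + 1) ≤ |(k : ℝ)| * ((m : ℝ) + 1) * |(c : ℝ)| :=
        le_mul_of_one_le_right (by positivity) hc1
      linarith
    linarith
  -- closedness of R
  have hclosed : IsClosed R := by
    apply isClosed_of_closure_subset
    intro y hy
    exact ⟨ChainAux4.chainTo_closure_right φh hT hrec (fun z hz => hz.1) hy,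
           ChainAux4.chainTo_closure_left φh hT hrec (fun z hz => hz.2) hy⟩
  -- the range of π is closed
  have hrange : IsClosed (Set.range π) := by
    rw [← isOpen_compl_iff, isOpen_iff_mem_nhds]
    intro m hm
    obtain ⟨-, U, hmU, hU, -, H, -⟩ := hcov m
    refine Filter.mem_of_superset (hU.mem_nhds hmU) ?_
    intro m' hm'
    simp only [Set.mem_compl_iff]
    rintro ⟨x, rfl⟩
    have hx : x ∈ π ⁻¹' U := hm'
    exact hm ⟨((H ⟨x, hx⟩).2 : Mh), (H ⟨x, hx⟩).2.2⟩
  -- preimages of compact intervals under f are compact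
  have hslabgen : ∀ lo hi : ℝ, IsCompact (f ⁻¹' Set.Icc lo hi) := by
    intro lo hi
    have hrc : IsCompact (Set.range π) := hrange.isCompact
    have hcover0 : Set.range π ⊆ ⋃ x : Mh, π '' Metric.ball x 1 := by
      rintro m ⟨x, rfl⟩
      exact Set.mem_iUnion.2 ⟨x, ⟨x, Metric.mem_ball_self one_pos, rfl⟩⟩
    obtain ⟨s, hs⟩ := hrc.elim_finite_subcover (fun x : Mh => π '' Metric.ball x 1)
      (fun x => hcov.isOpenMap _ Metric.isOpen_ball) hcover0
    set D : Set Mh := ⋃ x ∈ s, Metric.closedBall x 1 with hD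
    have hDc : IsCompact D :=
      s.finite_toSet.isCompact_biUnion (fun x _ => isCompact_closedBall x 1)
    obtain ⟨b, hb⟩ := hDc.exists_bound_of_continuousOn hfc.continuousOn
    have hcover : ∀ y : Mh, ∃ k : ℤ, (σ ^ k) y ∈ D := by
      intro y
      have h1 : π y ∈ ⋃ x ∈ s, π '' Metric.ball x 1 := hs ⟨y, rfl⟩
      obtain ⟨x, hxs, hmem⟩ := Set.mem_iUnion₂.1 h1
      obtain ⟨z, hz, hzy⟩ := hmem
      obtain ⟨k, hk⟩ := hdeck y z hzy.symm
      refine ⟨k, Set.mem_biUnion hxs ?_⟩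
      rw [hk]
      exact Metric.ball_subset_closedBall hz
    set r : ℝ := max |lo| |hi| with hr
    set K : ℤ := ⌈b + r⌉ with hK
    have hsub2 : f ⁻¹' Set.Icc lo hi ⊆ ⋃ k ∈ Finset.Icc (-K) K, ⇑(σ ^ k) '' D := by
      intro y hy
      have hy' : f y ∈ Set.Icc lo hi := hy
      obtain ⟨k, hkD⟩ := hcover y
      have hfy : |f y| ≤ r := by
        have h3 : -r ≤ lo := by
          have h4 := neg_abs_le lo
          have h5 := le_max_left |lo| |hi|
          rw [hr]
          linarith
        have h6 : hi ≤ r := le_trans (le_abs_self hi) (le_max_right _ _)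
        rw [abs_le]
        exact ⟨by linarith [hy'.1], by linarith [hy'.2]⟩
      have hbk : |f ((σ ^ k) y)| ≤ b := by
        simpa [Real.norm_eq_abs] using hb _ hkD
      have habs : |(k : ℝ) * c| ≤ b + r := by
        have heq : (k : ℝ) * c = f ((σ ^ k) y) - f y := by
          rw [hfk]
          ring
        rw [heq]
        calc |f ((σ ^ k) y) - f y| ≤ |f ((σ ^ k) y)| + |f y| := by
              have h0 := abs_add_le (f ((σ ^ k) y)) (-(f y))
              simpa [sub_eq_add_neg, abs_neg] using h0
          _ ≤ b + r := add_le_add hbk hfy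
      have h5 : |(k : ℝ)| ≤ b + r := by
        calc |(k : ℝ)| = |(k : ℝ)| * 1 := (mul_one _).symm
          _ ≤ |(k : ℝ)| * |(c : ℝ)| := mul_le_mul_of_nonneg_left hc1 (abs_nonneg _)
          _ = |(k : ℝ) * c| := (abs_mul _ _).symm
          _ ≤ b + r := habs
      have h8 : |k| ≤ K := by
        have h7 : (|k| : ℝ) ≤ (K : ℝ) := by
          push_cast
          exact le_trans h5 (Int.le_ceil _)
        exact_mod_cast h7
      rw [abs_le] at h8
      have h6 : -K ≤ -k ∧ -k ≤ K := by omega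
      refine Set.mem_biUnion (Finset.mem_Icc.2 h6) ?_
      refine ⟨(σ ^ k) y, hkD, ?_⟩
      rw [← Equiv.Perm.mul_apply, ← zpow_add, neg_add_cancel, zpow_zero,
        Equiv.Perm.coe_one, id_eq]
    have hEc : IsCompact (⋃ k ∈ Finset.Icc (-K) K, ⇑(σ ^ k) '' D) :=
      (Finset.Icc (-K) K).finite_toSet.isCompact_biUnion
        (fun k _ => hDc.image (hisok k).continuous)
    exact hEc.of_isClosed_subset (isClosed_Icc.preimage hfc) hsub2
  have hRsub : R ⊆ f ⁻¹' Set.Icc (f x₀ - C) (f x₀ + C) := by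
    intro y hy
    have h1 := hreach x₀ y hy.1
    have h2 := hreach y x₀ hy.2
    exact ⟨by linarith, by linarith⟩
  have hRcomp : IsCompact R :=
    (hslabgen (f x₀ - C) (f x₀ + C)).of_isClosed_subset hclosed hRsub
  refine ⟨hRcomp, ?_⟩
  haveI : CompactSpace ↥R := isCompact_iff_compactSpace.1 hRcomp
  have hbij : Function.Bijective
      (fun z : ↥R => (⟨π z, ⟨(z : Mh), z.2, rfl⟩⟩ : ↥(π '' R))) := by
    constructor
    · intro a b hab
      exact Subtype.ext (hinj a.2 b.2 (congrArg Subtype.val hab))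
    · rintro ⟨m, z, hz, rfl⟩
      exact ⟨⟨z, hz⟩, rfl⟩
  have hcont : Continuous
      (fun z : ↥R => (⟨π z, ⟨(z : Mh), z.2, rfl⟩⟩ : ↥(π '' R))) :=
    Continuous.subtype_mk (hcov.continuous.comp continuous_subtype_val) _
  exact ⟨Continuous.homeoOfEquivCompactToT2 (f := Equiv.ofBijective _ hbij) hcont,
    fun z => rfl⟩
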